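/- Let P, Q, R be arbitrary n×n matrices over a commutative ring. Then det [[0,P,Q],[-P,0,R],[-Q,-R,0]] · (det Q)^(n−2) = det(P·adj(Q)·R − R·adj(Q)·P), where adj(Q) is the adjugate of Q and n ≥ 2. -/

import Mathlib

open Matrix


/-- The 3×3 block matrix with n×n blocks. -/
def block3 {n : ℕ} {R : Type*} [CommRing R]
    (A B C D E F G H I : Matrix (Fin n) (Fin n) R) :
    Matrix (Fin 3 × Fin n) (Fin 3 × Fin n) R :=
  fun p q => ![![A, B, C], ![D, E, F], ![G, H, I]] p.1 q.1 p.2 q.2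

def e3 (n : ℕ) : (Fin n ⊕ Fin n) ⊕ Fin n ≃ Fin 3 × Fin n where
  toFun := Sum.elim (Sum.elim (fun i => (0, i)) (fun i => (1, i))) (fun i => (2, i))
  invFun p := if p.1 = 0 then Sum.inl (Sum.inl p.2) else
    if p.1 = 1 then Sum.inl (Sum.inr p.2) else Sum.inr p.2
  left_inv := by rintro ((i | i) | i) <;> simp
  right_inv := by
    rintro ⟨c, i⟩
    fin_cases c <;> simp

lemma det_block3_eq {n : ℕ} {S : Type*} [CommRing S]
    (A B C D E F G H I : Matrix (Fin n) (Fin n) S) :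
    (block3 A B C D E F G H I).det
      = (fromBlocks (fromBlocks A B D E) (fromRows C F) (fromCols G H) I).det := by
  rw [← Matrix.det_submatrix_equiv_self (e3 n)]
  congr 1
  ext i j
  rcases i with (i | i) | i <;> rcases j with (j | j) | j <;> rfl

lemma key_field {n : ℕ} (hn : 2 ≤ n) {F : Type*} [Field F]
    (P Q R : Matrix (Fin n) (Fin n) F) (hP : P.det ≠ 0) (hQ : Q.det ≠ 0) :
    (block3 0 P Q (-P) 0 R (-Q) (-R) 0).det * Q.det ^ (n - 2)
      = (P * Q.adjugate * R - R * Q.adjugate * P).det := by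
  have hPu : IsUnit P.det := isUnit_iff_ne_zero.2 hP
  have hQu : IsUnit Q.det := isUnit_iff_ne_zero.2 hQ
  haveI : Invertible P := P.invertibleOfIsUnitDet hPu
  haveI : Invertible Q := Q.invertibleOfIsUnitDet hQu
  set A : Matrix (Fin n ⊕ Fin n) (Fin n ⊕ Fin n) F := fromBlocks 0 P (-P) 0 with hA
  have hAinv : A * fromBlocks 0 (-(P⁻¹)) P⁻¹ 0 = 1 := by
    rw [hA, fromBlocks_multiply]
    simp [mul_nonsing_inv _ hPu, ← fromBlocks_one]
  haveI : Invertible A := invertibleOfRightInverse A _ hAinv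
  have hinvOf : ⅟A = fromBlocks 0 (-(P⁻¹)) P⁻¹ 0 := invOf_eq_right_inv hAinv
  -- determinant of A
  have hdetA : A.det = P.det ^ 2 := by
    have h1 : A * fromBlocks 1 0 P⁻¹ 1 = fromBlocks 1 P (-P) 0 := by
      rw [hA, fromBlocks_multiply]
      simp [mul_nonsing_inv _ hPu]
    have h2 := congrArg Matrix.det h1
    rw [det_mul, det_fromBlocks_zero₁₂, det_one, one_mul, mul_one,
      det_fromBlocks_one₁₁] at h2
    rw [h2]
    simp [Matrix.neg_mul, sq]
  -- Schur complement
  set Z : Matrix (Fin n) (Fin n) F := R * P⁻¹ * Q - Q * P⁻¹ * R with hZ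
  have hSchur : (block3 0 P Q (-P) 0 R (-Q) (-R) 0).det = P.det ^ 2 * Z.det := by
    rw [det_block3_eq, det_fromBlocks₁₁, hdetA, hinvOf]
    congr 2
    rw [fromCols_mul_fromBlocks, fromCols_mul_fromRows]
    rw [hZ]
    simp [Matrix.mul_assoc]
    abel
  -- the right-hand side
  have hadj : Q.adjugate = Q.det • Q⁻¹ := by
    calc Q.adjugate = Q⁻¹ * (Q * Q.adjugate) :=
          (Matrix.nonsing_inv_mul_cancel_left _ _ hQu).symm
      _ = Q⁻¹ * (Q.det • 1) := by rw [Matrix.mul_adjugate]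
      _ = Q.det • Q⁻¹ := by rw [Matrix.mul_smul, Matrix.mul_one]
  set X : Matrix (Fin n) (Fin n) F := P * Q⁻¹ * R - R * Q⁻¹ * P with hX
  have hY : P * Q.adjugate * R - R * Q.adjugate * P = Q.det • X := by
    rw [hadj, hX]
    simp [Matrix.mul_smul, Matrix.smul_mul, smul_sub]
  have hXZ : X = (P * Q⁻¹) * Z * (Q⁻¹ * P) := by
    rw [hX, hZ]
    simp [Matrix.mul_sub, Matrix.sub_mul, Matrix.mul_assoc,
      Matrix.mul_nonsing_inv_cancel_left, Matrix.nonsing_inv_mul_cancel_left,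
      Matrix.nonsing_inv_mul, Matrix.mul_nonsing_inv, hPu, hQu]
  have hdetQinv : (Q⁻¹).det = Q.det⁻¹ := by
    rw [Matrix.det_nonsing_inv, Ring.inverse_eq_inv']
  have hdetY : (P * Q.adjugate * R - R * Q.adjugate * P).det
      = Q.det ^ n * (P.det * Q.det⁻¹ * Z.det * (Q.det⁻¹ * P.det)) := by
    rw [hY, Matrix.det_smul, hXZ]
    simp [det_mul, hdetQinv, Fintype.card_fin]
  rw [hSchur, hdetY]
  obtain ⟨m, rfl⟩ : ∃ m, n = m + 2 := ⟨n - 2, by omega⟩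
  simp only [Nat.add_sub_cancel]
  field_simp
  ring

section Transfer

variable {n : ℕ} {S T : Type*} [CommRing S] [CommRing T]

lemma block3_map (f : S →+* T) (P Q R : Matrix (Fin n) (Fin n) S) :
    f.mapMatrix (block3 0 P Q (-P) 0 R (-Q) (-R) 0)
      = block3 0 (f.mapMatrix P) (f.mapMatrix Q) (-(f.mapMatrix P)) 0 (f.mapMatrix R)
          (-(f.mapMatrix Q)) (-(f.mapMatrix R)) 0 := by
  ext ⟨i, a⟩ ⟨j, b⟩
  fin_cases i <;> fin_cases j <;>
    simp [block3, RingHom.mapMatrix_apply]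

lemma map_lhs (f : S →+* T) (P Q R : Matrix (Fin n) (Fin n) S) :
    f ((block3 0 P Q (-P) 0 R (-Q) (-R) 0).det * Q.det ^ (n - 2))
      = (block3 0 (f.mapMatrix P) (f.mapMatrix Q) (-(f.mapMatrix P)) 0 (f.mapMatrix R)
          (-(f.mapMatrix Q)) (-(f.mapMatrix R)) 0).det * (f.mapMatrix Q).det ^ (n - 2) := by
  rw [_root_.map_mul, map_pow, RingHom.map_det, RingHom.map_det, block3_map]

lemma map_rhs (f : S →+* T) (P Q R : Matrix (Fin n) (Fin n) S) :
    f ((P * Q.adjugate * R - R * Q.adjugate * P).det)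
      = ((f.mapMatrix P) * (f.mapMatrix Q).adjugate * (f.mapMatrix R)
          - (f.mapMatrix R) * (f.mapMatrix Q).adjugate * (f.mapMatrix P)).det := by
  rw [RingHom.map_det, map_sub, _root_.map_mul, _root_.map_mul, _root_.map_mul, _root_.map_mul, RingHom.map_adjugate]

end Transfer

section Generic

variable (n : ℕ)

abbrev genR (n : ℕ) := MvPolynomial (Fin 3 × Fin n × Fin n) ℤ

noncomputable def gen (k : Fin 3) : Matrix (Fin n) (Fin n) (genR n) :=
  Matrix.of fun i j => MvPolynomial.X (k, i, j)

lemma gen_det_ne_zero (k : Fin 3) : (gen n k).det ≠ 0 := by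
  intro h
  have h2 : (MvPolynomial.eval
        (fun v : Fin 3 × Fin n × Fin n => if v.2.1 = v.2.2 then (1 : ℤ) else 0)).mapMatrix
        (gen n k) = (1 : Matrix (Fin n) (Fin n) ℤ) := by
    ext i j
    simp [gen, RingHom.mapMatrix_apply, Matrix.one_apply]
  have h3 := (MvPolynomial.eval
      (fun v : Fin 3 × Fin n × Fin n => if v.2.1 = v.2.2 then (1 : ℤ) else 0)).map_det (gen n k)
  rw [h, h2, map_zero, Matrix.det_one] at h3
  exact one_ne_zero h3.symm

lemma key_generic (hn : 2 ≤ n) :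
    (block3 0 (gen n 0) (gen n 1) (-(gen n 0)) 0 (gen n 2)
        (-(gen n 1)) (-(gen n 2)) 0).det * (gen n 1).det ^ (n - 2)
      = ((gen n 0) * (gen n 1).adjugate * (gen n 2)
          - (gen n 2) * (gen n 1).adjugate * (gen n 0)).det := by
  set K := FractionRing (genR n)
  set f := algebraMap (genR n) K with hf
  have hinj : Function.Injective f := IsFractionRing.injective (genR n) K
  apply hinj
  rw [map_lhs f, map_rhs f]
  have hdet : ∀ k : Fin 3, (f.mapMatrix (gen n k)).det ≠ 0 := by
    intro k
    rw [← RingHom.map_det]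
    simpa using fun h => gen_det_ne_zero n k (hinj (h.trans (map_zero f).symm))
  exact key_field hn _ _ _ (hdet 0) (hdet 1)

end Generic

/-- det [[0,P,Q],[-P,0,R],[-Q,-R,0]] · (det Q)^(n−2) = det(P·adj(Q)·R − R·adj(Q)·P)
for arbitrary n×n matrices over a commutative ring, n ≥ 2. -/
theorem det_block3_adjugate {n : ℕ} (hn : 2 ≤ n) {S : Type*} [CommRing S]
    (P Q R : Matrix (Fin n) (Fin n) S) :
    (block3 0 P Q (-P) 0 R (-Q) (-R) 0).det * Q.det ^ (n - 2)
      = (P * Q.adjugate * R - R * Q.adjugate * P).det := by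
  set φ : genR n →+* S :=
    MvPolynomial.eval₂Hom (Int.castRingHom S) (fun v => ![P, Q, R] v.1 v.2.1 v.2.2) with hφ
  have hmap : ∀ k : Fin 3, φ.mapMatrix (gen n k) = ![P, Q, R] k := by
    intro k
    ext i j
    simp [gen, hφ, RingHom.mapMatrix_apply]
  have h := congrArg φ (key_generic n hn)
  rw [map_lhs φ, map_rhs φ, hmap 0, hmap 1, hmap 2] at h
  simpa using h
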